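/- Let Φ be a unital quantum channel on M_d(ℂ) with d ≥ 2. (i) If Φ is c-scrambling, then Φ^{d−1} is strictly positive, i.e. Φ^{d−1}(ρ) is positive definite for every quantum state ρ. (ii) Consequently, if Φ is primitive and unital, then c(Φ) ≤ w(Φ) ≤ (d − 1)·c(Φ). -/

import Mathlib

open Matrix Filter
open scoped ComplexOrder

/-- The algebra of `n × n` complex matrices. -/
abbrev Mat (n : ℕ) := Matrix (Fin n) (Fin n) ℂ

/-- A linear map between matrix algebras is a quantum channel if it admits a Kraus
representation `Φ(X) = ∑ i, K i * X * (K i)ᴴ` with `∑ i, (K i)ᴴ * K i = 1`. -/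
def IsChannel {m n : ℕ} (Φ : Matrix (Fin m) (Fin m) ℂ →ₗ[ℂ] Mat n) : Prop :=
  ∃ (p : ℕ) (K : Fin p → Matrix (Fin n) (Fin m) ℂ),
    (∀ X, Φ X = ∑ i, K i * X * (K i)ᴴ) ∧ ∑ i, (K i)ᴴ * K i = 1

/-- A quantum state: positive semidefinite with unit trace. -/
def IsState {n : ℕ} (ρ : Mat n) : Prop := ρ.PosSemidef ∧ ρ.trace = 1

/-- The rank-one matrix `|ψ⟩⟨ψ|`. -/
def pureState {ι : Type*} (ψ : ι → ℂ) : Matrix ι ι ℂ :=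
  Matrix.of fun i j => ψ i * star (ψ j)

/-- `ψ` is a unit vector. -/
def IsUnitVec {ι : Type*} [Fintype ι] (ψ : ι → ℂ) : Prop :=
  ∑ i, star (ψ i) * ψ i = 1

/-- c-scrambling: outputs of orthogonal pure states are never orthogonal. -/
def CScrambling {n : ℕ} (Φ : Mat n →ₗ[ℂ] Mat n) : Prop :=
  ∀ ψ φ : Fin n → ℂ, IsUnitVec ψ → IsUnitVec φ → ∑ i, star (ψ i) * φ i = 0 →
    0 < (Φ (pureState ψ) * Φ (pureState φ)).trace

/-- A subspace `C ⊆ ℂ^n` is correctable for `Φ`. -/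
def Correctable {n : ℕ} (Φ : Mat n →ₗ[ℂ] Mat n) (C : Submodule ℂ (Fin n → ℂ)) : Prop :=
  ∃ R : Mat n →ₗ[ℂ] Mat n, IsChannel R ∧
    ∀ ρ : Mat n, IsState ρ → LinearMap.range ρ.mulVecLin ≤ C → R (Φ ρ) = ρ

/-- q-scrambling: no correctable subspace of dimension ≥ 2. -/
def QScrambling {n : ℕ} (Φ : Mat n →ₗ[ℂ] Mat n) : Prop :=
  ∀ C : Submodule ℂ (Fin n → ℂ), Correctable Φ C → Module.finrank ℂ C ≤ 1

/-- Apply `Φ` to the first tensor factor: `(Φ ⊗ id) M`. -/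
def tensorId {d₀ n d₁ : ℕ} (Φ : Matrix (Fin d₀) (Fin d₀) ℂ →ₗ[ℂ] Mat n)
    (M : Matrix (Fin d₀ × Fin d₁) (Fin d₀ × Fin d₁) ℂ) :
    Matrix (Fin n × Fin d₁) (Fin n × Fin d₁) ℂ :=
  Matrix.of fun p q => Φ (Matrix.of fun k l => M (k, p.2) (l, q.2)) p.1 q.1

/-- Vanishing one-shot zero-error entanglement-assisted classical capacity. -/
def VanishingC0E {n : ℕ} (Φ : Mat n →ₗ[ℂ] Mat n) : Prop :=
  ∀ (d₀ d₁ : ℕ), 0 < d₀ → 0 < d₁ → ∀ ψ : Fin d₀ × Fin d₁ → ℂ, IsUnitVec ψ →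
    ∀ E₁ E₂ : Matrix (Fin d₀) (Fin d₀) ℂ →ₗ[ℂ] Mat n, IsChannel E₁ → IsChannel E₂ →
      0 < (tensorId (Φ ∘ₗ E₁) (pureState ψ) * tensorId (Φ ∘ₗ E₂) (pureState ψ)).trace

/-- Mixing channel: `Φ^n X → Tr(X) ρ⋆` entrywise. -/
def Mixing {n : ℕ} (Φ : Module.End ℂ (Mat n)) : Prop :=
  ∃ ρ : Mat n, IsState ρ ∧
    ∀ X : Mat n, Tendsto (fun k => (Φ ^ k) X) atTop (nhds (X.trace • ρ))

/-- Strictly positive channel: every state is sent to a positive definite matrix. -/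
def StrictlyPositive {n : ℕ} (Φ : Mat n →ₗ[ℂ] Mat n) : Prop :=
  ∀ ρ : Mat n, IsState ρ → (Φ ρ).PosDef

/-- Primitive channel: mixing with positive definite invariant state. -/
def Primitive {n : ℕ} (Φ : Module.End ℂ (Mat n)) : Prop :=
  ∃ ρ : Mat n, IsState ρ ∧ ρ.PosDef ∧
    ∀ X : Mat n, Tendsto (fun k => (Φ ^ k) X) atTop (nhds (X.trace • ρ))

/-- Classical scrambling time `c(Φ)`. -/
noncomputable def cTime {n : ℕ} (Φ : Module.End ℂ (Mat n)) : ℕ∞ :=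
  sInf {N : ℕ∞ | ∃ k : ℕ, N = k ∧ 1 ≤ k ∧ CScrambling (Φ ^ k)}

/-- Quantum scrambling time `q(Φ)`. -/
noncomputable def qTime {n : ℕ} (Φ : Module.End ℂ (Mat n)) : ℕ∞ :=
  sInf {N : ℕ∞ | ∃ k : ℕ, N = k ∧ 1 ≤ k ∧ QScrambling (Φ ^ k)}

/-- Entanglement-assisted classical scrambling time `c_E(Φ)`. -/
noncomputable def cETime {n : ℕ} (Φ : Module.End ℂ (Mat n)) : ℕ∞ :=
  sInf {N : ℕ∞ | ∃ k : ℕ, N = k ∧ 1 ≤ k ∧ VanishingC0E (Φ ^ k)}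

/-- Wielandt index `w(Φ)`. -/
noncomputable def wTime {n : ℕ} (Φ : Module.End ℂ (Mat n)) : ℕ∞ :=
  sInf {N : ℕ∞ | ∃ k : ℕ, N = k ∧ 1 ≤ k ∧ StrictlyPositive (Φ ^ k)}

/-- `M(Φ)`: the maximal size of a zero-error classical code for `Φ`. -/
noncomputable def Mclassical {n : ℕ} (Φ : Mat n →ₗ[ℂ] Mat n) : ℕ :=
  sSup {M : ℕ | ∃ ψ : Fin M → Fin n → ℂ, (∀ m, IsUnitVec (ψ m)) ∧
    ∀ m m', m ≠ m' → (Φ (pureState (ψ m)) * Φ (pureState (ψ m'))).trace = 0}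

/-- `D(Φ)`: the maximal dimension of a correctable subspace for `Φ`. -/
noncomputable def Dquantum {n : ℕ} (Φ : Mat n →ₗ[ℂ] Mat n) : ℕ :=
  sSup {M : ℕ | ∃ C : Submodule ℂ (Fin n → ℂ), Correctable Φ C ∧ Module.finrank ℂ C = M}

/-- `M_E(Φ)`: the maximal size of an entanglement-assisted zero-error classical code. -/
noncomputable def MEclassical {n : ℕ} (Φ : Mat n →ₗ[ℂ] Mat n) : ℕ :=
  sSup {M : ℕ | ∃ (d₀ d₁ : ℕ) (ψ : Fin d₀ × Fin d₁ → ℂ), 0 < d₀ ∧ 0 < d₁ ∧ IsUnitVec ψ ∧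
    ∃ E : Fin M → (Matrix (Fin d₀) (Fin d₀) ℂ →ₗ[ℂ] Mat n),
      (∀ m, IsChannel (E m)) ∧
      ∀ m m', m ≠ m' →
        (tensorId (Φ ∘ₗ E m) (pureState ψ) * tensorId (Φ ∘ₗ E m') (pureState ψ)).trace = 0}

/-- The ordered product `K_{i 0} ⋯ K_{i (n-1)}` of Kraus operators. -/
noncomputable def krausProd {d p : ℕ} (K : Fin p → Mat d) {n : ℕ} (i : Fin n → Fin p) : Mat d :=
  (List.ofFn fun t => K (i t)).prod

/-- The operator system of `Φ^n`, for `Φ` with Kraus operators `K`. -/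
noncomputable def opSys {d p : ℕ} (K : Fin p → Mat d) (n : ℕ) : Submodule ℂ (Mat d) :=
  Submodule.span ℂ {X | ∃ i j : Fin n → Fin p, X = (krausProd K i)ᴴ * krausProd K j}

/-- `𝒦_n(Φ)`: the span of `n`-fold products of Kraus operators. -/
noncomputable def kSpan {d p : ℕ} (K : Fin p → Mat d) (n : ℕ) : Submodule ℂ (Mat d) :=
  Submodule.span ℂ {X | ∃ i : Fin n → Fin p, X = krausProd K i}

/-- `A` is column stochastic. -/
def ColumnStochastic {d : ℕ} (A : Matrix (Fin d) (Fin d) ℝ) : Prop :=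
  (∀ i j, 0 ≤ A i j) ∧ ∀ j, ∑ i, A i j = 1

/-- The CDUC map `Φ_{A,B}(X) = ∑ᵢⱼ A i j * X j j |i⟩⟨i| + ∑_{i≠j} B i j * X i j |i⟩⟨j|`. -/
noncomputable def cducMap {d : ℕ} (A : Matrix (Fin d) (Fin d) ℝ) (B : Mat d) :
    Mat d →ₗ[ℂ] Mat d where
  toFun X := Matrix.of fun i j =>
    if i = j then ∑ k, (A i k : ℂ) * X k k else B i j * X i j
  map_add' X Y := by
    ext i j
    by_cases h : i = j <;>
      simp [h, Matrix.add_apply, mul_add, Finset.sum_add_distrib]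
  map_smul' c X := by
    ext i j
    by_cases h : i = j <;>
      simp [h, Matrix.smul_apply, smul_eq_mul, Finset.mul_sum, mul_left_comm]

/-- The DUC map `Φ_{A,C}(X) = ∑ᵢⱼ A i j * X j j |i⟩⟨i| + ∑_{i≠j} C i j * X j i |i⟩⟨j|`. -/
noncomputable def ducMap {d : ℕ} (A : Matrix (Fin d) (Fin d) ℝ) (C : Mat d) :
    Mat d →ₗ[ℂ] Mat d where
  toFun X := Matrix.of fun i j =>
    if i = j then ∑ k, (A i k : ℂ) * X k k else C i j * X j i
  map_add' X Y := by
    ext i j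
    by_cases h : i = j <;>
      simp [h, Matrix.add_apply, mul_add, Finset.sum_add_distrib]
  map_smul' c X := by
    ext i j
    by_cases h : i = j <;>
      simp [h, Matrix.smul_apply, smul_eq_mul, Finset.mul_sum, mul_left_comm]

/-- The classical channel `Φ_A(X) = ∑ᵢⱼ A i j * X j j |i⟩⟨i|` of a stochastic matrix `A`. -/
noncomputable def classicalChannel {d : ℕ} (A : Matrix (Fin d) (Fin d) ℝ) :
    Mat d →ₗ[ℂ] Mat d :=
  cducMap A 0

/-- A stochastic matrix is scrambling if any two columns overlap in some row. -/
def MatScrambling {d : ℕ} (A : Matrix (Fin d) (Fin d) ℝ) : Prop :=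
  ∀ i j, ∃ k, 0 < A k i * A k j

/-- A matrix with strictly positive entries. -/
def MatStrictlyPositive {d : ℕ} (A : Matrix (Fin d) (Fin d) ℝ) : Prop :=
  ∀ i j, 0 < A i j

/-- A stochastic matrix is mixing if `1` is an eigenvalue of algebraic multiplicity one
and there is no other eigenvalue of modulus one. -/
def MatMixing {d : ℕ} (A : Matrix (Fin d) (Fin d) ℝ) : Prop :=
  Polynomial.rootMultiplicity 1 (Matrix.charpoly (A.map Complex.ofReal)) = 1 ∧
  ∀ μ : ℂ, ‖μ‖ = 1 → (Matrix.charpoly (A.map Complex.ofReal)).IsRoot μ → μ = 1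

/-- A stochastic matrix is primitive if it is mixing and its invariant probability
vector is entrywise strictly positive. -/
def MatPrimitive {d : ℕ} (A : Matrix (Fin d) (Fin d) ℝ) : Prop :=
  MatMixing A ∧
    ∀ v : Fin d → ℝ, (∀ i, 0 ≤ v i) → ∑ i, v i = 1 → A *ᵥ v = v → ∀ i, 0 < v i

/-- The scrambling time of a stochastic matrix. -/
noncomputable def cMat {d : ℕ} (A : Matrix (Fin d) (Fin d) ℝ) : ℕ∞ :=
  sInf {N : ℕ∞ | ∃ k : ℕ, N = k ∧ 1 ≤ k ∧ MatScrambling (A ^ k)}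

/-- The Wielandt index of a stochastic matrix. -/
noncomputable def wMat {d : ℕ} (A : Matrix (Fin d) (Fin d) ℝ) : ℕ∞ :=
  sInf {N : ℕ∞ | ∃ k : ℕ, N = k ∧ 1 ≤ k ∧ MatStrictlyPositive (A ^ k)}

/-- The matrix `A_d` from the paper (0-indexed). -/
noncomputable def Amat (d : ℕ) : Matrix (Fin d) (Fin d) ℝ :=
  Matrix.of fun i j =>
    if (i : ℕ) = d - 1 ∧ (j : ℕ) = 0 then 1
    else if (j : ℕ) = 1 ∧ ((i : ℕ) = 0 ∨ (i : ℕ) = d - 1) then 1 / 2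
    else if 2 ≤ (j : ℕ) ∧ (i : ℕ) + 1 = (j : ℕ) then 1
    else 0

section SQAux

open scoped MatrixOrder

lemma SQ.psd_diag_nonneg {d : ℕ} {A : Mat d} (hA : A.PosSemidef) (i : Fin d) : 0 ≤ A i i := by
  have h := hA.dotProduct_mulVec_nonneg (Pi.single i 1)
  simpa [dotProduct, Pi.single_apply, apply_ite] using h

lemma SQ.psd_trace_nonneg {d : ℕ} {A : Mat d} (hA : A.PosSemidef) : 0 ≤ A.trace := by
  exact Finset.sum_nonneg fun i _ => SQ.psd_diag_nonneg hA i

lemma SQ.trace_self_conjTranspose_eq_zero {d : ℕ} {M : Mat d}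
    (h : (M * Mᴴ).trace = 0) : M = 0 := by
  have h1 : (M * Mᴴ).trace = (↑(∑ i, ∑ j, Complex.normSq (M i j)) : ℂ) := by
    simp only [Matrix.trace, Matrix.diag, Matrix.mul_apply, Matrix.conjTranspose_apply,
      Complex.star_def]
    push_cast
    refine Finset.sum_congr rfl fun i _ => Finset.sum_congr rfl fun j _ => ?_
    rw [Complex.normSq_eq_conj_mul_self]; ring
  rw [h1, Complex.ofReal_eq_zero] at h
  have h2 : ∀ i ∈ Finset.univ, ∀ j ∈ Finset.univ, Complex.normSq (M i j) = 0 := by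
    have := (Finset.sum_eq_zero_iff_of_nonneg (fun i _ =>
      Finset.sum_nonneg (fun j _ => Complex.normSq_nonneg (M i j)))).mp h
    intro i hi j hj
    exact (Finset.sum_eq_zero_iff_of_nonneg (fun j _ => Complex.normSq_nonneg (M i j))).mp
      (this i hi) j hj
  ext i j
  exact Complex.normSq_eq_zero.mp (h2 i (Finset.mem_univ i) j (Finset.mem_univ j))

lemma SQ.psd_mul_eq_zero_of_trace {d : ℕ} {A B : Mat d} (hA : A.PosSemidef) (hB : B.PosSemidef)
    (h : (A * B).trace = 0) : A * B = 0 := by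
  set SA := CFC.sqrt A with hSA
  set SB := CFC.sqrt B with hSB
  have hSAh : SAᴴ = SA := (CFC.sqrt_nonneg A).posSemidef.isHermitian
  have hSBh : SBᴴ = SB := (CFC.sqrt_nonneg B).posSemidef.isHermitian
  have hAe : SA * SA = A := CFC.sqrt_mul_sqrt_self A hA.nonneg
  have hBe : SB * SB = B := CFC.sqrt_mul_sqrt_self B hB.nonneg
  have key : (SA * SB) * (SA * SB)ᴴ = SA * SB * SB * SA := by
    rw [Matrix.conjTranspose_mul, hSAh, hSBh]; noncomm_ring
  have htr : ((SA * SB) * (SA * SB)ᴴ).trace = (A * B).trace := by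
    rw [key, ← hAe, ← hBe, Matrix.trace_mul_comm]
    simp only [mul_assoc]
  have hM : SA * SB = 0 := SQ.trace_self_conjTranspose_eq_zero (by rw [htr, h])
  calc A * B = SA * (SA * SB) * SB := by rw [← hAe, ← hBe]; noncomm_ring
  _ = 0 := by rw [hM]; simp

lemma SQ.kraus_psd {d p : ℕ} (K : Fin p → Mat d) {X : Mat d} (hX : X.PosSemidef) :
    (∑ i, K i * X * (K i)ᴴ).PosSemidef :=
  Finset.sum_induction _ _ (fun _ _ ha hb => ha.add hb) Matrix.PosSemidef.zero
    (fun i _ => hX.mul_mul_conjTranspose_same (K i))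

lemma SQ.kraus_psd' {d p : ℕ} (K : Fin p → Mat d) {X : Mat d} (hX : X.PosSemidef) :
    (∑ i, (K i)ᴴ * X * K i).PosSemidef :=
  Finset.sum_induction _ _ (fun _ _ ha hb => ha.add hb) Matrix.PosSemidef.zero
    (fun i _ => hX.conjTranspose_mul_mul_same (K i))

lemma SQ.trace_dual {d p : ℕ} (K : Fin p → Mat d) (P X : Mat d) :
    ((∑ i, (K i)ᴴ * P * K i) * X).trace = (P * ∑ i, K i * X * (K i)ᴴ).trace := by
  rw [Finset.sum_mul, Matrix.mul_sum, Matrix.trace_sum, Matrix.trace_sum]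
  refine Finset.sum_congr rfl fun i _ => ?_
  calc ((K i)ᴴ * P * K i * X).trace = ((K i)ᴴ * (P * K i * X)).trace := by
        simp only [mul_assoc]
    _ = ((P * K i * X) * (K i)ᴴ).trace := Matrix.trace_mul_comm _ _
    _ = (P * (K i * X * (K i)ᴴ)).trace := by simp only [mul_assoc]

lemma SQ.kraus_trace {d p : ℕ} (K : Fin p → Mat d) (hK : ∑ i, (K i)ᴴ * K i = 1) (X : Mat d) :
    (∑ i, K i * X * (K i)ᴴ).trace = X.trace := by
  rw [Matrix.trace_sum]
  have h : ∀ i : Fin p, (K i * X * (K i)ᴴ).trace = ((K i)ᴴ * K i * X).trace := fun i =>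
    (Matrix.trace_mul_cycle (K i) X (K i)ᴴ)
  simp_rw [h]
  rw [← Matrix.trace_sum, ← Finset.sum_mul, hK, one_mul]

lemma SQ.pureState_posSemidef {d : ℕ} (ψ : Fin d → ℂ) : (pureState ψ).PosSemidef := by
  refine Matrix.PosSemidef.of_dotProduct_mulVec_nonneg ?_ ?_
  · ext i j
    simp [pureState, Matrix.conjTranspose_apply, mul_comm]
  · intro x
    have hmv : pureState ψ *ᵥ x = (star ψ ⬝ᵥ x) • ψ := by
      ext i
      simp only [Matrix.mulVec, dotProduct, pureState, Matrix.of_apply, Pi.smul_apply,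
        smul_eq_mul, Pi.star_apply]
      rw [Finset.sum_mul]
      exact Finset.sum_congr rfl fun j _ => by ring
    rw [hmv, dotProduct_smul]
    have : star x ⬝ᵥ ψ = star (star ψ ⬝ᵥ x) := by
      simp only [dotProduct, Pi.star_apply, star_sum, star_mul', star_star]
      exact Finset.sum_congr rfl fun j _ => by ring
    rw [smul_eq_mul, this]
    exact mul_star_self_nonneg _
lemma SQ.pureState_trace {d : ℕ} (ψ : Fin d → ℂ) (h : ∑ i, star (ψ i) * ψ i = 1) :
    (pureState ψ).trace = 1 := by
  simp only [Matrix.trace, Matrix.diag, pureState, Matrix.of_apply]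
  rw [← h]
  exact Finset.sum_congr rfl fun i _ => by ring

lemma SQ.trace_mul_pureState {d : ℕ} (Q : Mat d) (ψ : Fin d → ℂ) :
    (Q * pureState ψ).trace = star ψ ⬝ᵥ (Q *ᵥ ψ) := by
  simp only [Matrix.trace, Matrix.diag, Matrix.mul_apply, pureState, Matrix.of_apply,
    dotProduct, Matrix.mulVec, Pi.star_apply, Finset.mul_sum]
  refine Finset.sum_congr rfl fun i _ => Finset.sum_congr rfl fun j _ => by ring

lemma SQ.trace_eq_sum_eigenvalues {d : ℕ} {A : Mat d} (hA : A.IsHermitian) :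
    A.trace = ∑ i, (hA.eigenvalues i : ℂ) := by
  conv_lhs => rw [hA.spectral_theorem]
  rw [Unitary.conjStarAlgAut_apply]
  rw [Matrix.trace_mul_cycle]
  have hU : star ((hA.eigenvectorUnitary : Mat d)) * (hA.eigenvectorUnitary : Mat d) = 1 :=
    Unitary.coe_star_mul_self _
  rw [hU, one_mul, Matrix.trace_diagonal]
  simp

lemma SQ.eigenvalues_le_one {d : ℕ} {Q : Mat d} (hQ : Q.PosSemidef) (h1 : (1 - Q).PosSemidef)
    (i : Fin d) : hQ.isHermitian.eigenvalues i ≤ 1 := by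
  set v : Fin d → ℂ := ⇑(hQ.isHermitian.eigenvectorBasis i) with hv
  have hev : Q *ᵥ v = hQ.isHermitian.eigenvalues i • v :=
    hQ.isHermitian.mulVec_eigenvectorBasis i
  have hnorm : star v ⬝ᵥ v = 1 := by
    have h := inner_self_eq_norm_sq_to_K (𝕜 := ℂ) (hQ.isHermitian.eigenvectorBasis i)
    rw [hQ.isHermitian.eigenvectorBasis.orthonormal.1 i] at h
    rw [EuclideanSpace.inner_eq_star_dotProduct, dotProduct_comm] at h
    simpa using h
  have h2 := h1.dotProduct_mulVec_nonneg v
  simp only [Matrix.sub_mulVec, Matrix.one_mulVec, dotProduct_sub, hev, dotProduct_smul,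
    hnorm, smul_eq_mul, mul_one, Complex.real_smul] at h2
  rw [show (1 - (hQ.isHermitian.eigenvalues i : ℂ)) =
      ((1 - hQ.isHermitian.eigenvalues i : ℝ) : ℂ) by push_cast; ring] at h2
  have := Complex.zero_le_real.mp h2
  linarith

lemma SQ.posDef_of_rank_eq {d : ℕ} {A : Mat d} (hA : A.PosSemidef) (h : A.rank = d) :
    A.PosDef := by
  have heig : ∀ i, hA.isHermitian.eigenvalues i ≠ 0 := by
    intro i hi
    have hc := hA.isHermitian.rank_eq_card_non_zero_eigs
    have hlt : Fintype.card {j // hA.isHermitian.eigenvalues j ≠ 0} < Fintype.card (Fin d) :=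
      Fintype.card_subtype_lt (x := i) (by simp [hi])
    rw [← hc, h, Fintype.card_fin] at hlt
    exact lt_irrefl _ hlt
  have hdet : A.det ≠ 0 := by
    rw [hA.isHermitian.det_eq_prod_eigenvalues]
    exact Finset.prod_ne_zero_iff.mpr fun i _ => by
      simpa using heig i
  have hinj : Function.Injective A.mulVec :=
    Matrix.mulVec_injective_iff_isUnit.mpr ((Matrix.isUnit_iff_isUnit_det A).mpr hdet.isUnit)
  refine Matrix.PosDef.of_dotProduct_mulVec_pos hA.isHermitian fun x hx => ?_
  refine lt_of_le_of_ne (hA.dotProduct_mulVec_nonneg x) (Ne.symm ?_)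
  intro h0
  have := (hA.dotProduct_mulVec_zero_iff x).mp h0
  exact hx (hinj (by simpa using this))

namespace SQ
open Matrix

lemma eigenvectorBasis_unit {d : ℕ} {A : Mat d} (hA : A.IsHermitian) (i : Fin d) :
    star ⇑(hA.eigenvectorBasis i) ⬝ᵥ ⇑(hA.eigenvectorBasis i) = 1 := by
  have h := inner_self_eq_norm_sq_to_K (𝕜 := ℂ) (hA.eigenvectorBasis i)
  rw [hA.eigenvectorBasis.orthonormal.1 i] at h
  rw [EuclideanSpace.inner_eq_star_dotProduct, dotProduct_comm] at h
  simpa using h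

lemma key {d p : ℕ} (Φ : Mat d →ₗ[ℂ] Mat d) (K : Fin p → Mat d)
    (hrep : ∀ X, Φ X = ∑ i, K i * X * (K i)ᴴ)
    (hTP : ∑ i, (K i)ᴴ * K i = 1)
    (hUn : ∑ i, K i * (K i)ᴴ = 1)
    (hscr : CScrambling Φ)
    {ρ : Mat d} (hρ : ρ.PosSemidef) (hρtr : ρ.trace = 1) :
    (Φ ρ).rank = d ∨ ρ.rank < (Φ ρ).rank := by
  by_cases hfull : (Φ ρ).rank = d
  · exact Or.inl hfull
  right
  have hσ : (Φ ρ).PosSemidef := by rw [hrep]; exact SQ.kraus_psd K hρ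
  have hσtr : (Φ ρ).trace = 1 := by rw [hrep, SQ.kraus_trace K hTP]; exact hρtr
  have hrankle : (Φ ρ).rank ≤ d := le_trans (Matrix.rank_le_card_width _) (by simp)
  have hlt : (Φ ρ).rank < d := lt_of_le_of_ne hrankle hfull
  -- eigen data of σ := Φ ρ
  have hherm := hσ.isHermitian
  set e : Fin d → ℝ := hherm.eigenvalues with he
  set U : Mat d := (hherm.eigenvectorUnitary : Mat d) with hUdef
  have hUstar : star U * U = 1 := Unitary.coe_star_mul_self _
  have hUstar' : U * star U = 1 := Unitary.coe_mul_star_self _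
  have conj_mul : ∀ X Y : Mat d, (U * X * star U) * (U * Y * star U) = U * (X * Y) * star U := by
    intro X Y
    calc (U * X * star U) * (U * Y * star U)
        = U * X * (star U * U) * Y * star U := by simp only [mul_assoc]
      _ = U * (X * Y) * star U := by rw [hUstar]; simp only [mul_one, mul_assoc]
  set D : Mat d := Matrix.diagonal (fun i => if e i = 0 then (1:ℂ) else 0) with hD
  set P : Mat d := U * D * star U with hPdef
  have hDpsd : D.PosSemidef := Matrix.posSemidef_diagonal_iff.mpr
    (fun i => by by_cases h : e i = 0 <;> simp [h])
  have hPpsd : P.PosSemidef := by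
    have h := hDpsd.mul_mul_conjTranspose_same U
    rw [hPdef]
    simpa [Matrix.star_eq_conjTranspose] using h
  have h1P : ((1 : Mat d) - P).PosSemidef := by
    have h1D : ((1 : Mat d) - D).PosSemidef := by
      rw [hD, ← Matrix.diagonal_one, Matrix.diagonal_sub]
      exact Matrix.posSemidef_diagonal_iff.mpr
        (fun i => by by_cases h : e i = 0 <;> simp [h])
    have heq : (1 : Mat d) - P = U * ((1 : Mat d) - D) * star U := by
      rw [Matrix.mul_sub, Matrix.sub_mul, mul_one, hUstar']
    rw [heq]
    have h := h1D.mul_mul_conjTranspose_same U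
    simpa [Matrix.star_eq_conjTranspose] using h
  have hσP : (Φ ρ) * P = 0 := by
    have hDeD : Matrix.diagonal (RCLike.ofReal ∘ e) * D = 0 := by
      rw [hD, Matrix.diagonal_mul_diagonal]
      ext i j
      by_cases h : e i = 0 <;> by_cases hij : i = j <;>
        simp [Matrix.diagonal_apply, h, hij]
    calc (Φ ρ) * P = (U * Matrix.diagonal (RCLike.ofReal ∘ e) * star U) * (U * D * star U) := by
          conv_lhs => rw [hherm.spectral_theorem]
          rw [Unitary.conjStarAlgAut_apply]
      _ = U * (Matrix.diagonal (RCLike.ofReal ∘ e) * D) * star U := conj_mul _ _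
      _ = 0 := by rw [hDeD, mul_zero, zero_mul]
  have hPtr : P.trace = (Fintype.card {i // e i = 0} : ℂ) := by
    rw [hPdef, Matrix.trace_mul_cycle, hUstar, one_mul, Matrix.trace_diagonal]
    rw [Fintype.card_subtype]
    simp [Finset.sum_boole]
  -- the dual operator Q
  set Q : Mat d := ∑ i, (K i)ᴴ * P * K i with hQdef
  have hQpsd : Q.PosSemidef := SQ.kraus_psd' K hPpsd
  have hQtr : Q.trace = P.trace := by
    rw [hQdef, Matrix.trace_sum]
    have h : ∀ i : Fin p, ((K i)ᴴ * P * K i).trace = (P * (K i * (K i)ᴴ)).trace := by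
      intro i
      calc ((K i)ᴴ * P * K i).trace = ((K i)ᴴ * (P * K i)).trace := by simp only [mul_assoc]
        _ = ((P * K i) * (K i)ᴴ).trace := Matrix.trace_mul_comm _ _
        _ = (P * (K i * (K i)ᴴ)).trace := by simp only [mul_assoc]
    simp_rw [h]
    rw [← Matrix.trace_sum, ← Matrix.mul_sum, hUn, mul_one]
  have h1Q : ((1 : Mat d) - Q).PosSemidef := by
    have heq : (1 : Mat d) - Q = ∑ i, (K i)ᴴ * ((1 : Mat d) - P) * K i := by
      simp only [Matrix.mul_sub, Matrix.sub_mul, mul_one, Finset.sum_sub_distrib, hTP]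
      rfl
    rw [heq]
    exact SQ.kraus_psd' K h1P
  have hQρtr : (Q * ρ).trace = 0 := by
    rw [hQdef, SQ.trace_dual K P ρ, ← hrep, Matrix.trace_mul_comm, hσP, Matrix.trace_zero]
  have hQρ : Q * ρ = 0 := SQ.psd_mul_eq_zero_of_trace hQpsd hρ hQρtr
  have hranksum : Q.rank + ρ.rank ≤ d := by
    simpa using Matrix.rank_add_rank_le_card_of_mul_eq_zero hQρ
  -- eigenvalues of Q
  set μ : Fin d → ℝ := hQpsd.isHermitian.eigenvalues with hμ
  have hμ0 : ∀ i, 0 ≤ μ i := hQpsd.eigenvalues_nonneg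
  have hμ1 : ∀ i, μ i ≤ 1 := SQ.eigenvalues_le_one hQpsd h1Q
  have hQrank : Q.rank = Fintype.card {i // μ i ≠ 0} :=
    hQpsd.isHermitian.rank_eq_card_non_zero_eigs
  have hsum : ∑ i, μ i = (Fintype.card {i // e i = 0} : ℝ) := by
    have h1 : Q.trace = ∑ i, (μ i : ℂ) := SQ.trace_eq_sum_eigenvalues hQpsd.isHermitian
    rw [hQtr, hPtr] at h1
    have := h1.symm
    push_cast at this ⊢
    exact_mod_cast this
  have hcard0_le_rank : Fintype.card {i // e i = 0} ≤ Q.rank := by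
    have h2 : ∑ i, μ i ≤ (Fintype.card {i // μ i ≠ 0} : ℝ) := by
      rw [Fintype.card_subtype]
      calc ∑ i, μ i = ∑ i ∈ Finset.univ.filter (fun i => μ i ≠ 0), μ i :=
            (Finset.sum_filter_ne_zero _).symm
        _ ≤ ∑ _i ∈ Finset.univ.filter (fun i => μ i ≠ 0), (1:ℝ) :=
            Finset.sum_le_sum (fun i _ => hμ1 i)
        _ = _ := by simp
    rw [hsum] at h2
    rw [hQrank]
    exact_mod_cast h2
  have hcard : Fintype.card {i // e i = 0} + (Φ ρ).rank = d := by
    have h3 : (Φ ρ).rank = Fintype.card {i // e i ≠ 0} := hherm.rank_eq_card_non_zero_eigs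
    have h4 : Fintype.card {i // e i ≠ 0} = d - Fintype.card {i // e i = 0} := by
      simpa using Fintype.card_subtype_compl (fun i => e i = 0)
    have h5 : Fintype.card {i // e i = 0} ≤ d := by
      simpa using Fintype.card_subtype_le (fun i => e i = 0)
    omega
  have hle : ρ.rank ≤ (Φ ρ).rank := by omega
  rcases lt_or_eq_of_le hle with h | heq
  · exact h
  -- equality case: contradiction with scrambling
  exfalso
  have hQrank_eq : Q.rank = Fintype.card {i // e i = 0} := by omega
  have hμone : ∀ i, μ i ≠ 0 → μ i = 1 := by
    intro i hi
    have hsub : Fintype.card {i // μ i ≠ 0} = (Finset.univ.filter (fun i => μ i ≠ 0)).card :=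
      Fintype.card_subtype _
    have hzero : ∑ j ∈ Finset.univ.filter (fun j => μ j ≠ 0), (1 - μ j) = 0 := by
      rw [Finset.sum_sub_distrib]
      have : ∑ j ∈ Finset.univ.filter (fun j => μ j ≠ 0), μ j = ∑ j, μ j :=
        Finset.sum_filter_ne_zero _
      rw [this, hsum, ← hQrank_eq, hQrank, hsub]
      simp
    have := (Finset.sum_eq_zero_iff_of_nonneg (fun j hj => by
      have := hμ1 j; linarith)).mp hzero i (by simp [hi])
    linarith
  -- pick eigenvectors
  have hcardμpos : 0 < Fintype.card {i // μ i ≠ 0} := by omega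
  obtain ⟨i0⟩ := Fintype.card_pos_iff.mp hcardμpos
  set φv : Fin d → ℂ := ⇑(hQpsd.isHermitian.eigenvectorBasis i0.1) with hφv
  have hν : ∑ i, hρ.isHermitian.eigenvalues i = 1 := by
    have h1 : ρ.trace = ∑ i, (hρ.isHermitian.eigenvalues i : ℂ) :=
      SQ.trace_eq_sum_eigenvalues hρ.isHermitian
    rw [hρtr] at h1
    exact_mod_cast h1.symm
  have hνex : ∃ j, hρ.isHermitian.eigenvalues j ≠ 0 := by
    by_contra h
    push_neg at h
    rw [Finset.sum_eq_zero (fun j _ => h j)] at hν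
    norm_num at hν
  obtain ⟨j0, hj0⟩ := hνex
  set ψv : Fin d → ℂ := ⇑(hρ.isHermitian.eigenvectorBasis j0) with hψv
  have hφunit : star φv ⬝ᵥ φv = 1 := SQ.eigenvectorBasis_unit _ _
  have hψunit : star ψv ⬝ᵥ ψv = 1 := SQ.eigenvectorBasis_unit _ _
  have hQφ : Q *ᵥ φv = φv := by
    have h := hQpsd.isHermitian.mulVec_eigenvectorBasis i0.1
    rw [← hμ] at h
    rw [hμone _ i0.2] at h
    simpa using h
  have hQψ : Q *ᵥ ψv = 0 := by
    have hρψ : ρ *ᵥ ψv = hρ.isHermitian.eigenvalues j0 • ψv :=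
      hρ.isHermitian.mulVec_eigenvectorBasis j0
    have h0 : Q *ᵥ (ρ *ᵥ ψv) = 0 := by
      rw [Matrix.mulVec_mulVec, hQρ, Matrix.zero_mulVec]
    rw [hρψ, Matrix.mulVec_smul] at h0
    rcases smul_eq_zero.mp h0 with h | h
    · exact absurd h hj0
    · exact h
  have horth : star ψv ⬝ᵥ φv = 0 := by
    rw [← hQφ, Matrix.dotProduct_mulVec]
    have h : star ψv ᵥ* Q = star (Q *ᵥ ψv) := by
      rw [Matrix.star_mulVec, hQpsd.isHermitian.eq]
    rw [h, hQψ]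
    simp
  have hpos := hscr ψv φv hψunit hφunit (by simpa [dotProduct] using horth)
  -- now show the trace is zero
  have hApsd : (Φ (pureState ψv)).PosSemidef := by
    rw [hrep]; exact SQ.kraus_psd K (SQ.pureState_posSemidef ψv)
  have hBpsd : (Φ (pureState φv)).PosSemidef := by
    rw [hrep]; exact SQ.kraus_psd K (SQ.pureState_posSemidef φv)
  have hBtr : (Φ (pureState φv)).trace = 1 := by
    rw [hrep, SQ.kraus_trace K hTP]
    exact SQ.pureState_trace φv (by simpa [dotProduct] using hφunit)
  have hPA : (P * Φ (pureState ψv)).trace = 0 := by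
    rw [hrep, ← SQ.trace_dual K P (pureState ψv), ← hQdef, SQ.trace_mul_pureState, hQψ]
    simp
  have hPA0 : P * Φ (pureState ψv) = 0 := SQ.psd_mul_eq_zero_of_trace hPpsd hApsd hPA
  have hAP0 : Φ (pureState ψv) * P = 0 := by
    have h := congrArg Matrix.conjTranspose hPA0
    rwa [Matrix.conjTranspose_mul, hPpsd.isHermitian.eq, hApsd.isHermitian.eq,
      Matrix.conjTranspose_zero] at h
  have hPB : (P * Φ (pureState φv)).trace = 1 := by
    rw [hrep, ← SQ.trace_dual K P (pureState φv), ← hQdef, SQ.trace_mul_pureState, hQφ]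
    exact hφunit
  have h1PB : (((1 : Mat d) - P) * Φ (pureState φv)).trace = 0 := by
    rw [Matrix.sub_mul, one_mul, Matrix.trace_sub, hBtr, hPB, sub_self]
  have h1PB0 : ((1 : Mat d) - P) * Φ (pureState φv) = 0 :=
    SQ.psd_mul_eq_zero_of_trace h1P hBpsd h1PB
  have hB : Φ (pureState φv) = P * Φ (pureState φv) := by
    have := h1PB0
    rw [Matrix.sub_mul, one_mul, sub_eq_zero] at this
    exact this
  have hfin : (Φ (pureState ψv) * Φ (pureState φv)).trace = 0 := by
    calc (Φ (pureState ψv) * Φ (pureState φv)).trace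
        = (Φ (pureState ψv) * (P * Φ (pureState φv))).trace := by rw [← hB]
      _ = ((Φ (pureState ψv) * P) * Φ (pureState φv)).trace := by
            rw [← mul_assoc (Φ (pureState ψv)) P (Φ (pureState φv))]
      _ = 0 := by rw [hAP0, zero_mul, Matrix.trace_zero]
  rw [hfin] at hpos
  exact lt_irrefl _ hpos
end SQ

namespace SQ
open Matrix

lemma channel_state {d : ℕ} {Φ : Mat d →ₗ[ℂ] Mat d} (hΦ : IsChannel Φ) {ρ : Mat d}
    (hρ : IsState ρ) : IsState (Φ ρ) := by
  obtain ⟨p, K, hrep, hTP⟩ := hΦ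
  exact ⟨by rw [hrep]; exact kraus_psd K hρ.1, by rw [hrep, kraus_trace K hTP]; exact hρ.2⟩

lemma isChannel_one {d : ℕ} : IsChannel (1 : Module.End ℂ (Mat d)) := by
  refine ⟨1, fun _ => 1, fun X => ?_, by simp⟩
  simp

lemma isChannel_mul {d : ℕ} {Φ Ψ : Module.End ℂ (Mat d)} (hΦ : IsChannel Φ)
    (hΨ : IsChannel Ψ) : IsChannel (Φ * Ψ) := by
  obtain ⟨p, K, hK, hKn⟩ := hΦ
  obtain ⟨q, L, hL, hLn⟩ := hΨ
  refine ⟨p * q, fun x => K (finProdFinEquiv.symm x).1 * L (finProdFinEquiv.symm x).2,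
    fun X => ?_, ?_⟩
  · have h1 : (Φ * Ψ) X = ∑ ij : Fin p × Fin q,
        (K ij.1 * L ij.2) * X * (K ij.1 * L ij.2)ᴴ := by
      rw [Module.End.mul_apply, hK, hL]
      rw [Fintype.sum_prod_type]
      refine Finset.sum_congr rfl fun i _ => ?_
      rw [Finset.mul_sum, Finset.sum_mul]
      refine Finset.sum_congr rfl fun j _ => ?_
      simp only [Matrix.conjTranspose_mul, mul_assoc]
    rw [h1]
    exact (Equiv.sum_comp finProdFinEquiv.symm
      (fun ij => (K ij.1 * L ij.2) * X * (K ij.1 * L ij.2)ᴴ)).symm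
  · have h2 : ∑ ij : Fin p × Fin q, (K ij.1 * L ij.2)ᴴ * (K ij.1 * L ij.2) = 1 := by
      rw [Fintype.sum_prod_type_right]
      have h3 : ∀ j : Fin q, ∑ i : Fin p, (K i * L j)ᴴ * (K i * L j)
          = (L j)ᴴ * L j := by
        intro j
        have : ∀ i : Fin p, (K i * L j)ᴴ * (K i * L j) = (L j)ᴴ * ((K i)ᴴ * K i) * L j := by
          intro i
          simp only [Matrix.conjTranspose_mul, mul_assoc]
        simp_rw [this]
        rw [← Finset.sum_mul, ← Matrix.mul_sum, hKn, mul_one]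
      simp_rw [h3, hLn]
    rw [← h2]
    exact Equiv.sum_comp finProdFinEquiv.symm
      (fun ij => (K ij.1 * L ij.2)ᴴ * (K ij.1 * L ij.2))

lemma isChannel_pow {d : ℕ} {Φ : Module.End ℂ (Mat d)} (hΦ : IsChannel Φ) (k : ℕ) :
    IsChannel (Φ ^ k) := by
  induction k with
  | zero => simpa [pow_zero] using isChannel_one (d := d)
  | succ n ih => rw [pow_succ]; exact isChannel_mul ih hΦ

lemma unital_pow {d : ℕ} {Φ : Module.End ℂ (Mat d)} (hU : Φ 1 = 1) (k : ℕ) :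
    (Φ ^ k) 1 = 1 := by
  induction k with
  | zero => simp
  | succ n ih => rw [pow_succ, Module.End.mul_apply, hU, ih]

lemma rank_pos_of_state {d : ℕ} {ρ : Mat d} (hρ : ρ.PosSemidef) (htr : ρ.trace = 1) :
    1 ≤ ρ.rank := by
  have h1 : ρ.trace = ∑ i, (hρ.isHermitian.eigenvalues i : ℂ) :=
    trace_eq_sum_eigenvalues hρ.isHermitian
  rw [htr] at h1
  have hsum : ∑ i, hρ.isHermitian.eigenvalues i = 1 := by exact_mod_cast h1.symm
  have hex : ∃ j, hρ.isHermitian.eigenvalues j ≠ 0 := by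
    by_contra h
    push_neg at h
    rw [Finset.sum_eq_zero (fun j _ => h j)] at hsum
    norm_num at hsum
  obtain ⟨j, hj⟩ := hex
  rw [hρ.isHermitian.rank_eq_card_non_zero_eigs]
  exact Fintype.card_pos_iff.mpr ⟨⟨j, hj⟩⟩

lemma strict {d : ℕ} (hd : 2 ≤ d) (Φ : Module.End ℂ (Mat d)) (hΦ : IsChannel Φ)
    (hU : Φ 1 = 1) (hscr : CScrambling Φ) : StrictlyPositive (Φ ^ (d - 1)) := by
  obtain ⟨p, K, hrep, hTP⟩ := hΦ
  have hUn : ∑ i, K i * (K i)ᴴ = 1 := by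
    have := hrep 1
    rw [hU] at this
    simpa using this.symm
  intro ρ hρ
  have main : ∀ k : ℕ, IsState ((Φ ^ k) ρ) ∧ min (k + 1) d ≤ ((Φ ^ k) ρ).rank := by
    intro k
    induction k with
    | zero =>
      rw [pow_zero]
      refine ⟨by simpa using hρ, ?_⟩
      have h1 : 1 ≤ ρ.rank := rank_pos_of_state hρ.1 hρ.2
      simpa using le_trans (min_le_left 1 d) h1
    | succ n ih =>
      obtain ⟨hstate, hrank⟩ := ih
      have happ : (Φ ^ (n + 1)) ρ = Φ ((Φ ^ n) ρ) := by
        rw [pow_succ', Module.End.mul_apply]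
      have hstate' : IsState ((Φ ^ (n+1)) ρ) := by
        rw [happ]
        exact channel_state ⟨p, K, hrep, hTP⟩ hstate
      refine ⟨hstate', ?_⟩
      have hkey := key Φ K hrep hTP hUn hscr hstate.1 hstate.2
      have hle : (Φ ((Φ ^ n) ρ)).rank ≤ d :=
        le_trans (Matrix.rank_le_card_width _) (by simp)
      rw [happ]
      rcases hkey with h | h
      · omega
      · omega
  obtain ⟨hstate, hrank⟩ := main (d - 1)
  have hr : ((Φ ^ (d-1)) ρ).rank = d := by
    have hle : ((Φ ^ (d-1)) ρ).rank ≤ d :=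
      le_trans (Matrix.rank_le_card_width _) (by simp)
    omega
  exact posDef_of_rank_eq hstate.1 hr

lemma trace_pos_of_posDef_state {d : ℕ} {A B : Mat d} (hA : A.PosDef) (hB : B.PosSemidef)
    (hBtr : B.trace = 1) : 0 < (A * B).trace := by
  have hne : (A * B).trace ≠ 0 := by
    intro h
    have hAB := psd_mul_eq_zero_of_trace hA.posSemidef hB h
    have hBzero : B = 0 := by
      have hdet : IsUnit A.det := hA.det_pos.ne'.isUnit
      have h2 : A⁻¹ * (A * B) = B := by
        rw [← mul_assoc, Matrix.nonsing_inv_mul A hdet, one_mul]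
      rw [hAB, mul_zero] at h2
      exact h2.symm
    rw [hBzero, Matrix.trace_zero] at hBtr
    norm_num at hBtr
  have hnn : 0 ≤ (A * B).trace := by
    have htr : (A * B).trace = (CFC.sqrt B * A * CFC.sqrt B).trace := by
      conv_lhs => rw [← CFC.sqrt_mul_sqrt_self B hB.nonneg]
      calc (A * (CFC.sqrt B * CFC.sqrt B)).trace
          = ((A * CFC.sqrt B) * CFC.sqrt B).trace := by rw [mul_assoc]
        _ = (CFC.sqrt B * (A * CFC.sqrt B)).trace := Matrix.trace_mul_comm _ _
        _ = (CFC.sqrt B * A * CFC.sqrt B).trace := by rw [mul_assoc]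
    rw [htr]
    have hpsd : (CFC.sqrt B * A * CFC.sqrt B).PosSemidef := by
      have h := hA.posSemidef.mul_mul_conjTranspose_same (CFC.sqrt B)
      rwa [(CFC.sqrt_nonneg B).posSemidef.isHermitian.eq] at h
    exact psd_trace_nonneg hpsd
  exact lt_of_le_of_ne hnn (Ne.symm hne)

lemma cscrambling_of_strict {d : ℕ} {Ψ : Mat d →ₗ[ℂ] Mat d} (hΨ : IsChannel Ψ)
    (hsp : StrictlyPositive Ψ) : CScrambling Ψ := by
  intro ψ φ hψ hφ _
  have hψs : IsState (pureState ψ) := ⟨pureState_posSemidef ψ, pureState_trace ψ hψ⟩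
  have hφs : IsState (pureState φ) := ⟨pureState_posSemidef φ, pureState_trace φ hφ⟩
  have hA : (Ψ (pureState ψ)).PosDef := hsp _ hψs
  have hB : IsState (Ψ (pureState φ)) := channel_state hΨ hφs
  exact trace_pos_of_posDef_state hA hB.1 hB.2

end SQ


end SQAux

/-- If a unital channel on `M_d(ℂ)` is c-scrambling, then `Φ^(d-1)` is
strictly positive; consequently a primitive unital channel satisfies
`c(Φ) ≤ w(Φ) ≤ (d-1) c(Φ)`. -/
theorem unital_scrambling_strict_positivity (d : ℕ) (hd : 2 ≤ d)
    (Φ : Module.End ℂ (Mat d)) (hΦ : IsChannel Φ) (hunital : Φ 1 = 1) :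
    (CScrambling Φ → StrictlyPositive (Φ ^ (d - 1))) ∧
    (Primitive Φ → cTime Φ ≤ wTime Φ ∧ wTime Φ ≤ ((d - 1 : ℕ) : ℕ∞) * cTime Φ) := by
  constructor
  · intro hscr
    exact SQ.strict hd Φ hΦ hunital hscr
  · intro _hprim
    constructor
    · apply sInf_le_sInf
      rintro N ⟨k, rfl, hk1, hsp⟩
      exact ⟨k, rfl, hk1, SQ.cscrambling_of_strict (SQ.isChannel_pow hΦ k) hsp⟩
    · by_cases hne : {N : ℕ∞ | ∃ k : ℕ, N = k ∧ 1 ≤ k ∧ CScrambling (Φ ^ k)}.Nonempty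
      · set T : Set ℕ := {k : ℕ | 1 ≤ k ∧ CScrambling (Φ ^ k)} with hT
        have hTne : T.Nonempty := by
          obtain ⟨N, k, rfl, h1, h2⟩ := hne
          exact ⟨k, h1, h2⟩
        set k0 := sInf T with hk0def
        have hk0 : k0 ∈ T := Nat.sInf_mem hTne
        have hch : IsChannel (Φ ^ k0) := SQ.isChannel_pow hΦ k0
        have huni : (Φ ^ k0) 1 = 1 := SQ.unital_pow hunital k0
        have hsp : StrictlyPositive ((Φ ^ k0) ^ (d - 1)) :=
          SQ.strict hd (Φ ^ k0) hch huni hk0.2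
        have hsp' : StrictlyPositive (Φ ^ (k0 * (d - 1))) := by
          rw [pow_mul]
          exact hsp
        have hw : wTime Φ ≤ ((k0 * (d - 1) : ℕ) : ℕ∞) := by
          apply sInf_le
          refine ⟨k0 * (d - 1), rfl, ?_, hsp'⟩
          have h1 : 1 ≤ k0 := hk0.1
          have h2 : 1 ≤ d - 1 := by omega
          exact Nat.one_le_iff_ne_zero.mpr (by positivity)
        have hc : (k0 : ℕ∞) ≤ cTime Φ := by
          apply le_sInf
          rintro N ⟨k, rfl, hk1, hscr⟩
          exact_mod_cast Nat.cast_le.mpr (Nat.sInf_le (show k ∈ T from ⟨hk1, hscr⟩))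
        calc wTime Φ ≤ ((k0 * (d - 1) : ℕ) : ℕ∞) := hw
          _ = ((d - 1 : ℕ) : ℕ∞) * (k0 : ℕ∞) := by push_cast; ring
          _ ≤ ((d - 1 : ℕ) : ℕ∞) * cTime Φ := mul_le_mul_right hc _
      · have hempty : {N : ℕ∞ | ∃ k : ℕ, N = k ∧ 1 ≤ k ∧ CScrambling (Φ ^ k)} = ∅ :=
          Set.not_nonempty_iff_eq_empty.mp hne
        have hctop : cTime Φ = ⊤ := by rw [cTime, hempty, sInf_empty]
        rw [hctop]
        have : ((d - 1 : ℕ) : ℕ∞) * ⊤ = ⊤ := by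
          apply WithTop.mul_top
          exact (Nat.cast_ne_zero.mpr (show (d - 1 : ℕ) ≠ 0 by omega) : ((d - 1 : ℕ) : ℕ∞) ≠ 0)
        rw [this]
        exact le_top
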